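/- Let k = 6/5 and f_k(z) = ((1+k)/2 − z)^((1+k)/(2k)) · (z + (k−1)/2)^((k−1)/(2k)). Let G = (V,E) be any finite simple graph with any arrival order v_1, …, v_n of its vertices, and run GreedyAllocation with allocation function f_k, producing final potentials y : V → [0,1]. Then y is a fractional vertex cover of G, and for every fractional vertex cover y* of G, Σ_{v∈V} y_v ≤ 1.901 · Σ_{v∈V} y*_v. -/

import Mathlib

open Finset

/-- The water level chosen by `GreedyAllocation` with allocation function `f`:
the supremum of `t ∈ [0,1]` such that raising all potentials in `S` up to `t`
costs at most `f t`. -/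
noncomputable def waterLevel {ι : Type*} (f : ℝ → ℝ) (S : Finset ι) (y : ι → ℝ) : ℝ :=
  sSup {t ∈ Set.Icc (0:ℝ) 1 | ∑ u ∈ S, max (t - y u) 0 ≤ f t}

/-- The previously arrived neighbors of vertex `i` (vertices arrive in the
order `0, 1, …, n-1`; `E` is the adjacency predicate of the graph). -/
def neighborsBefore {n : ℕ} (E : Fin n → Fin n → Bool) (i : Fin n) : Finset (Fin n) :=
  Finset.univ.filter fun j => j < i ∧ E j i = true

/-- Potentials maintained by `GreedyAllocation` with allocation function `f`
after `i` vertices have been processed. When vertex `i` arrives, the water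
level `w` is computed over its previously arrived neighbors; each such
neighbor's potential is raised to at least `w`, and vertex `i` receives
potential `1 - w`. -/
noncomputable def greedyPotential (f : ℝ → ℝ) {n : ℕ} (E : Fin n → Fin n → Bool) :
    ℕ → Fin n → ℝ
  | 0 => fun _ => 0
  | (i + 1) => fun v =>
      if h : i < n then
        let vi : Fin n := ⟨i, h⟩
        let w := waterLevel f (neighborsBefore E vi) (greedyPotential f E i)
        if v = vi then 1 - w
        else if v ∈ neighborsBefore E vi then max (greedyPotential f E i v) w
        else greedyPotential f E i v
      else greedyPotential f E i v

/-- The water level used when processing vertex `i`. -/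
noncomputable def stepLevel (f : ℝ → ℝ) {n : ℕ} (E : Fin n → Fin n → Bool) (i : Fin n) : ℝ :=
  waterLevel f (neighborsBefore E i) (greedyPotential f E i.val)

/-- The edge values set by the `PrimalDual` algorithm: when vertex `i` arrives,
for each previously arrived neighbor `j` the edge `(j,i)` receives value
`(max(w_i - y_j, 0)/β)·(1 + (1 - w_i)/f(w_i))`, using the potentials before
updating; all other pairs get `0`. -/
noncomputable def pdEdge (f : ℝ → ℝ) (β : ℝ) {n : ℕ} (E : Fin n → Fin n → Bool)
    (j i : Fin n) : ℝ :=
  if j < i ∧ E j i = true then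
    (max (stepLevel f E i - greedyPotential f E i.val j) 0 / β) *
      (1 + (1 - stepLevel f E i) / f (stepLevel f E i))
  else 0

/-! ### Auxiliary development -/

noncomputable def Fk (z : ℝ) : ℝ := (11/10 - z) ^ ((11:ℝ)/12) * (z + 1/10) ^ ((1:ℝ)/12)

lemma Fk_pos {z : ℝ} (h0 : 0 ≤ z) (h1 : z ≤ 1) : 0 < Fk z := by
  have h2 : (0:ℝ) < 11/10 - z := by linarith
  have h3 : (0:ℝ) < z + 1/10 := by linarith
  exact mul_pos (Real.rpow_pos_of_pos h2 _) (Real.rpow_pos_of_pos h3 _)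

lemma Fk_one_sub {z : ℝ} : Fk (1 - z) = (z + 1/10) ^ ((11:ℝ)/12) * (11/10 - z) ^ ((1:ℝ)/12) := by
  unfold Fk ; ring_nf

lemma hasDerivAt_Fk {z : ℝ} (h0 : 0 ≤ z) (h1 : z ≤ 1) :
    HasDerivAt Fk (-(z / Fk (1 - z))) z := by
  have hP : (0:ℝ) < 11/10 - z := by linarith
  have hQ : (0:ℝ) < z + 1/10 := by linarith
  have d1 : HasDerivAt (fun z : ℝ => 11/10 - z) (-1) z := by
    simpa using (hasDerivAt_id z).const_sub (11/10 : ℝ)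
  have d2 : HasDerivAt (fun z : ℝ => z + 1/10) 1 z := by
    simpa using (hasDerivAt_id z).add_const (1/10 : ℝ)
  have d := (d1.rpow_const (p := (11:ℝ)/12) (Or.inl hP.ne')).mul
    (d2.rpow_const (p := (1:ℝ)/12) (Or.inl hQ.ne'))
  convert d using 1
  case e'_4 => rfl
  case e'_5 => rfl
  case e'_8 => rfl
  rw [Real.rpow_sub_one hP.ne', Real.rpow_sub_one hQ.ne', Fk_one_sub]
  have hPa : (11/10 - z) ^ ((11:ℝ)/12) * (11/10 - z) ^ ((1:ℝ)/12) = 11/10 - z := by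
    rw [← Real.rpow_add hP] ; norm_num
  have hQa : (z + 1/10) ^ ((11:ℝ)/12) * (z + 1/10) ^ ((1:ℝ)/12) = z + 1/10 := by
    rw [← Real.rpow_add hQ] ; norm_num
  have hPp := Real.rpow_pos_of_pos hP ((11:ℝ)/12)
  have hQp := Real.rpow_pos_of_pos hQ ((1:ℝ)/12)
  have hPp2 := Real.rpow_pos_of_pos hP ((1:ℝ)/12)
  have hQp2 := Real.rpow_pos_of_pos hQ ((11:ℝ)/12)
  set p := (11/10 - z) ^ ((11:ℝ)/12) with hp
  set q := (z + 1/10) ^ ((1:ℝ)/12) with hq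
  set p2 := (11/10 - z) ^ ((1:ℝ)/12) with hp2
  set q2 := (z + 1/10) ^ ((11:ℝ)/12) with hq2
  have key : (-1 * (11/12) * (p / (11/10 - z)) * q + p * (1 * (1/12) * (q / (z + 1/10))))
      * (q2 * p2) = -z := by
    have step : (-1 * (11/12) * (p / (11/10 - z)) * q + p * (1 * (1/12) * (q / (z + 1/10))))
        * (q2 * p2)
        = (p * p2) * (q2 * q) * ((1/12) / (z + 1/10) - (11/12) / (11/10 - z)) := by ring
    rw [step, hPa, hQa]
    obtain ⟨P, hPdef⟩ : ∃ P, 11/10 - z = P := ⟨_, rfl⟩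
    obtain ⟨Q, hQdef⟩ : ∃ Q, z + 1/10 = Q := ⟨_, rfl⟩
    have h1 : P ≠ 0 := hPdef ▸ hP.ne'
    have h2 : Q ≠ 0 := hQdef ▸ hQ.ne'
    rw [hPdef, hQdef]
    have e : P * Q * (1/12 / Q - 11/12 / P) = (1/12) * P - (11/12) * Q := by
      field_simp
    rw [e] ; linarith [hPdef, hQdef]
  rw [show -(z / (q2 * p2)) = -z / (q2 * p2) from (neg_div _ _).symm, eq_comm,
    eq_div_iff (by positivity : q2 * p2 ≠ 0)]
  linarith [key]

/-- the identity `z / Fk (1-z) = (z/(z+1/10)) * ((z+1/10)/(11/10-z))^(1/12)` -/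
lemma negderiv_eq {z : ℝ} (h0 : 0 ≤ z) (h1 : z ≤ 1) :
    z / Fk (1 - z) = (z / (z + 1/10)) * ((z + 1/10) / (11/10 - z)) ^ ((1:ℝ)/12) := by
  have hP : (0:ℝ) < 11/10 - z := by linarith
  have hQ : (0:ℝ) < z + 1/10 := by linarith
  rw [Fk_one_sub, Real.div_rpow hQ.le hP.le]
  have hQa : (z + 1/10) ^ ((11:ℝ)/12) * (z + 1/10) ^ ((1:ℝ)/12) = z + 1/10 := by
    rw [← Real.rpow_add hQ] ; norm_num
  have hQp2 := Real.rpow_pos_of_pos hQ ((11:ℝ)/12)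
  have hQp := Real.rpow_pos_of_pos hQ ((1:ℝ)/12)
  have hPp := Real.rpow_pos_of_pos hP ((1:ℝ)/12)
  rw [div_mul_div_comm, div_eq_div_iff (by positivity) (by positivity)]
  linear_combination (-(z * (11/10 - z) ^ ((1:ℝ)/12))) * hQa

/-- monotonicity of `z ↦ z / Fk (1-z)` on `[0,1]` -/
lemma negderiv_mono {s t : ℝ} (h0 : 0 ≤ s) (hst : s ≤ t) (h1 : t ≤ 1) :
    s / Fk (1 - s) ≤ t / Fk (1 - t) := by
  rw [negderiv_eq h0 (le_trans hst h1), negderiv_eq (le_trans h0 hst) h1]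
  have hPs : (0:ℝ) < 11/10 - s := by linarith
  have hPt : (0:ℝ) < 11/10 - t := by linarith
  have hQs : (0:ℝ) < s + 1/10 := by linarith
  have hQt : (0:ℝ) < t + 1/10 := by linarith
  have m1 : s / (s + 1/10) ≤ t / (t + 1/10) := by
    rw [div_le_div_iff₀ hQs hQt] ; nlinarith
  have m2 : ((s + 1/10) / (11/10 - s)) ^ ((1:ℝ)/12) ≤
      ((t + 1/10) / (11/10 - t)) ^ ((1:ℝ)/12) := by
    apply Real.rpow_le_rpow (div_nonneg hQs.le hPs.le) _ (by norm_num)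
    rw [div_le_div_iff₀ hPs hPt] ; nlinarith
  exact mul_le_mul m1 m2 (Real.rpow_nonneg (div_nonneg hQs.le hPs.le) _)
    (div_nonneg (le_trans h0 hst) hQt.le)

/-- tangent line at left endpoint lies above the graph -/
lemma Fk_tangent {s t : ℝ} (h0 : 0 ≤ s) (hst : s ≤ t) (h1 : t ≤ 1) :
    Fk t - Fk s ≤ -(s / Fk (1 - s)) * (t - s) := by
  rcases eq_or_lt_of_le hst with rfl | hlt
  · simp
  · have hcont : ContinuousOn Fk (Set.Icc s t) := fun z hz =>
      (hasDerivAt_Fk (le_trans h0 hz.1) (le_trans hz.2 h1)).continuousAt.continuousWithinAt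
    obtain ⟨ξ, hξ, hder⟩ := exists_hasDerivAt_eq_slope Fk (fun z => -(z / Fk (1 - z))) hlt hcont
      (fun z hz => hasDerivAt_Fk (le_trans h0 hz.1.le) (le_trans hz.2.le h1))
    rw [eq_comm, div_eq_iff (sub_ne_zero.mpr hlt.ne')] at hder
    rw [hder]
    have := negderiv_mono h0 hξ.1.le (le_trans hξ.2.le h1)
    nlinarith [this, sub_pos.mpr hlt]

/-- The key amortization inequality: each potential raise is dominated by the
increment of the antiderivative `H z = z + Fk (1-z)`. -/
lemma keyIneq {y y' : ℝ} (h0 : 0 ≤ y) (hyy : y ≤ y') (h1 : y' ≤ 1) :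
    (y' - y) * (1 + (1 - y') / Fk y') ≤ (y' + Fk (1 - y')) - (y + Fk (1 - y)) := by
  have h := Fk_tangent (s := 1 - y') (t := 1 - y) (by linarith) (by linarith) (by linarith)
  have e : (1 : ℝ) - (1 - y') = y' := by ring
  rw [e] at h
  have : (y' - y) * ((1 - y') / Fk y') ≤ Fk (1 - y') - Fk (1 - y) := by nlinarith [h]
  nlinarith [this]

lemma H_mono {y y' : ℝ} (h0 : 0 ≤ y) (hyy : y ≤ y') (h1 : y' ≤ 1) :
    y + Fk (1 - y) ≤ y' + Fk (1 - y') := by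
  have h := keyIneq h0 hyy h1
  have hF := Fk_pos (le_trans h0 hyy) h1
  have : 0 ≤ (y' - y) * (1 + (1 - y') / Fk y') := by
    apply mul_nonneg (by linarith)
    have : 0 ≤ (1 - y') / Fk y' := div_nonneg (by linarith) hF.le
    linarith
  linarith

lemma Fk_zero_le : Fk 0 ≤ 901/1000 := by
  have h : Fk 0 = (11/10 : ℝ) ^ ((11:ℝ)/12) * (1/10 : ℝ) ^ ((1:ℝ)/12) := by
    unfold Fk ; norm_num
  have h12 : (Fk 0) ^ (12 : ℕ) ≤ (901/1000 : ℝ) ^ (12 : ℕ) := by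
    rw [h, mul_pow, ← Real.rpow_natCast ((11/10:ℝ) ^ ((11:ℝ)/12)) 12,
      ← Real.rpow_natCast ((1/10:ℝ) ^ ((1:ℝ)/12)) 12,
      ← Real.rpow_mul (by norm_num : (0:ℝ) ≤ 11/10),
      ← Real.rpow_mul (by norm_num : (0:ℝ) ≤ 1/10)]
    norm_num
  have hF0 : 0 ≤ Fk 0 := (Fk_pos le_rfl zero_le_one).le
  exact le_of_pow_le_pow_left₀ (by norm_num) (by norm_num) h12

lemma Fk_contOn : ContinuousOn Fk (Set.Icc (0:ℝ) 1) := by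
  apply ContinuousOn.mul
  · apply ContinuousOn.rpow_const (by fun_prop)
    intro x hx
    left
    have : (0:ℝ) < 11/10 - x := by have := hx.2 ; simp at this ⊢ ; linarith [hx.1, hx.2]
    exact this.ne'
  · apply ContinuousOn.rpow_const (by fun_prop)
    intro x hx
    left
    have : (0:ℝ) < x + 1/10 := by linarith [hx.1]
    exact this.ne'

section WL
variable {ι : Type*} (S : Finset ι) (y : ι → ℝ)

lemma wl_set_closed :
    IsClosed {t ∈ Set.Icc (0:ℝ) 1 | ∑ u ∈ S, max (t - y u) 0 ≤ Fk t} := by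
  have hg : Continuous fun t : ℝ => ∑ u ∈ S, max (t - y u) 0 := by
    apply continuous_finset_sum
    intro u _
    exact (continuous_id.sub continuous_const).max continuous_const
  have := (Fk_contOn.sub hg.continuousOn).preimage_isClosed_of_isClosed
    isClosed_Icc (isClosed_Ici (a := (0:ℝ)))
  convert this using 1
  ext t
  simp [Set.mem_setOf_eq, sub_nonneg]

lemma wl_spec (hy : ∀ u ∈ S, 0 ≤ y u) :
    waterLevel Fk S y ∈ Set.Icc (0:ℝ) 1 ∧
      ∑ u ∈ S, max (waterLevel Fk S y - y u) 0 ≤ Fk (waterLevel Fk S y) := by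
  set T := {t ∈ Set.Icc (0:ℝ) 1 | ∑ u ∈ S, max (t - y u) 0 ≤ Fk t} with hT
  have h0 : (0:ℝ) ∈ T := by
    constructor
    · exact ⟨le_rfl, zero_le_one⟩
    · have : ∑ u ∈ S, max (0 - y u) 0 = 0 := by
        apply Finset.sum_eq_zero
        intro u hu
        simp [max_eq_right, hy u hu]
      rw [this]
      exact (Fk_pos le_rfl zero_le_one).le
  have hbdd : BddAbove T := BddAbove.mono (fun t ht => ht.1) bddAbove_Icc
  have hmem : waterLevel Fk S y ∈ T :=
    (wl_set_closed S y).csSup_mem ⟨0, h0⟩ hbdd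
  exact ⟨hmem.1, hmem.2⟩

lemma wl_tight (hy : ∀ u ∈ S, 0 ≤ y u) (hlt : waterLevel Fk S y < 1) :
    Fk (waterLevel Fk S y) ≤ ∑ u ∈ S, max (waterLevel Fk S y - y u) 0 := by
  set w := waterLevel Fk S y with hw
  obtain ⟨hwIcc, _⟩ := wl_spec S y hy
  by_contra hcon
  push_neg at hcon
  -- the function g - Fk is continuous within Icc at w and negative at w
  have hg : Continuous fun t : ℝ => ∑ u ∈ S, max (t - y u) 0 := by
    apply continuous_finset_sum
    intro u _
    exact (continuous_id.sub continuous_const).max continuous_const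
  have hc : ContinuousWithinAt (fun t => ∑ u ∈ S, max (t - y u) 0 - Fk t)
      (Set.Icc (0:ℝ) 1) w := (hg.continuousOn.sub Fk_contOn) w hwIcc
  have hev : {t : ℝ | ∑ u ∈ S, max (t - y u) 0 - Fk t < 0} ∈
      nhdsWithin w (Set.Icc (0:ℝ) 1) :=
    hc (Iio_mem_nhds (by simpa using sub_neg.mpr hcon))
  have hsub : Set.Ioo w 1 ⊆ Set.Icc (0:ℝ) 1 := fun t ht =>
    ⟨le_trans hwIcc.1 ht.1.le, ht.2.le⟩
  have hev2 : {t : ℝ | ∑ u ∈ S, max (t - y u) 0 - Fk t < 0} ∈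
      nhdsWithin w (Set.Ioo w 1) := nhdsWithin_mono w hsub hev
  have hIoo : Set.Ioo w 1 ∈ nhdsWithin w (Set.Ioo w 1) := self_mem_nhdsWithin
  have hne : (nhdsWithin w (Set.Ioo w 1)).NeBot := by
    have : nhdsWithin w (Set.Ioo w 1) = nhdsWithin w (Set.Ioi w) := by
      rw [← nhdsWithin_Ioo_eq_nhdsGT hlt]
    rw [this]
    exact nhdsGT_neBot w
  obtain ⟨t, ht1, ht2⟩ := hne.nonempty_of_mem (Filter.inter_mem hev2 hIoo)
  have htT : t ∈ {t ∈ Set.Icc (0:ℝ) 1 | ∑ u ∈ S, max (t - y u) 0 ≤ Fk t} :=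
    ⟨hsub ht2, by simp only [Set.mem_setOf_eq] at ht1; linarith⟩
  have : t ≤ w := le_csSup (BddAbove.mono (fun t ht => ht.1) bddAbove_Icc) htT
  linarith [ht2.1]
end WL

lemma Y_succ (f : ℝ → ℝ) {n : ℕ} (E : Fin n → Fin n → Bool) {m : ℕ} (h : m < n) (v : Fin n) :
    greedyPotential f E (m+1) v =
      if v = ⟨m,h⟩ then 1 - stepLevel f E ⟨m,h⟩
      else if v ∈ neighborsBefore E ⟨m,h⟩ then
        max (greedyPotential f E m v) (stepLevel f E ⟨m,h⟩)
      else greedyPotential f E m v := by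
  simp only [greedyPotential, h, dif_pos]
  rfl

lemma Y_succ_ge (f : ℝ → ℝ) {n : ℕ} (E : Fin n → Fin n → Bool) {m : ℕ} (h : ¬ m < n) (v : Fin n) :
    greedyPotential f E (m+1) v = greedyPotential f E m v := by
  simp only [greedyPotential, h, dif_neg, not_false_iff]

section Greedy
variable {n : ℕ} (E : Fin n → Fin n → Bool)

/-- `v` is untouched before its arrival. -/
lemma Y_zero : ∀ (m : ℕ) (v : Fin n), m ≤ v.val → greedyPotential Fk E m v = 0 := by
  intro m
  induction m with
  | zero => intro v _; rfl
  | succ m ih =>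
    intro v hv
    by_cases h : m < n
    · rw [Y_succ Fk E h v]
      have h1 : v ≠ ⟨m, h⟩ := by
        intro he
        rw [he] at hv
        simp at hv
      have h2 : v ∉ neighborsBefore E ⟨m, h⟩ := by
        simp only [neighborsBefore, mem_filter, mem_univ, true_and, not_and]
        intro hlt
        exfalso
        have : v.val < m := hlt
        omega
      rw [if_neg h1, if_neg h2]
      exact ih v (by omega)
    · rw [Y_succ_ge Fk E h v]; exact ih v (by omega)

/-- potentials stay in `[0,1]`. -/
lemma Y_bounds : ∀ (m : ℕ) (v : Fin n),
    0 ≤ greedyPotential Fk E m v ∧ greedyPotential Fk E m v ≤ 1 := by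
  intro m
  induction m with
  | zero => intro v; exact ⟨le_rfl, zero_le_one⟩
  | succ m ih =>
    intro v
    by_cases h : m < n
    · have hw := wl_spec (neighborsBefore E ⟨m,h⟩) (greedyPotential Fk E m)
        (fun u _ => (ih u).1)
      have hw0 : 0 ≤ stepLevel Fk E ⟨m,h⟩ := hw.1.1
      have hw1 : stepLevel Fk E ⟨m,h⟩ ≤ 1 := hw.1.2
      rw [Y_succ Fk E h v]
      split_ifs with h1 h2
      · constructor <;> linarith
      · constructor
        · exact le_trans (ih v).1 (le_max_left _ _)
        · exact max_le (ih v).2 hw1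
      · exact ih v
    · rw [Y_succ_ge Fk E h v]; exact ih v

/-- the step level is in `[0,1]` and the raise is at most `Fk w`. -/
lemma step_spec {m : ℕ} (h : m < n) :
    stepLevel Fk E ⟨m,h⟩ ∈ Set.Icc (0:ℝ) 1 ∧
      ∑ u ∈ neighborsBefore E ⟨m,h⟩,
        max (stepLevel Fk E ⟨m,h⟩ - greedyPotential Fk E m u) 0 ≤
          Fk (stepLevel Fk E ⟨m,h⟩) :=
  wl_spec (neighborsBefore E ⟨m,h⟩) (greedyPotential Fk E m)
    (fun u _ => (Y_bounds E m u).1)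

lemma step_tight {m : ℕ} (h : m < n) (hlt : stepLevel Fk E ⟨m,h⟩ < 1) :
    Fk (stepLevel Fk E ⟨m,h⟩) ≤ ∑ u ∈ neighborsBefore E ⟨m,h⟩,
      max (stepLevel Fk E ⟨m,h⟩ - greedyPotential Fk E m u) 0 :=
  wl_tight (neighborsBefore E ⟨m,h⟩) (greedyPotential Fk E m)
    (fun u _ => (Y_bounds E m u).1) hlt

/-- potentials never decrease. -/
lemma Y_mono_step (m : ℕ) (v : Fin n) :
    greedyPotential Fk E m v ≤ greedyPotential Fk E (m+1) v := by
  by_cases h : m < n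
  · rw [Y_succ Fk E h v]
    split_ifs with h1 h2
    · have : greedyPotential Fk E m v = 0 := by
        apply Y_zero
        rw [h1]
      rw [this]
      linarith [(step_spec E h).1.2]
    · exact le_max_left _ _
    · exact le_rfl
  · rw [Y_succ_ge Fk E h v]

lemma Y_mono (m m' : ℕ) (v : Fin n) (hm : m ≤ m') :
    greedyPotential Fk E m v ≤ greedyPotential Fk E m' v := by
  induction m' with
  | zero => simp at hm; simp [hm]
  | succ k ih =>
    rcases Nat.lt_or_ge m (k+1) with hlt | hge
    · exact le_trans (ih (by omega)) (Y_mono_step E k v)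
    · have : m = k + 1 := by omega
      simp [this]

lemma Y_arrival (v : Fin n) :
    greedyPotential Fk E (v.val + 1) v = 1 - stepLevel Fk E v := by
  have h : v.val < n := v.isLt
  rw [Y_succ Fk E h v]
  rw [if_pos (by exact (Fin.eta v h).symm)]

end Greedy

section Dual
variable {n : ℕ} (E : Fin n → Fin n → Bool)

/-- unnormalized dual edge values -/
noncomputable def xe (j i : Fin n) : ℝ :=
  if j < i ∧ E j i = true then
    max (stepLevel Fk E i - greedyPotential Fk E i.val j) 0 *
      (1 + (1 - stepLevel Fk E i) / Fk (stepLevel Fk E i))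
  else 0

lemma step_spec' (i : Fin n) :
    stepLevel Fk E i ∈ Set.Icc (0:ℝ) 1 ∧
      ∑ u ∈ neighborsBefore E i,
        max (stepLevel Fk E i - greedyPotential Fk E i.val u) 0 ≤
          Fk (stepLevel Fk E i) :=
  step_spec E i.isLt

lemma fac_nonneg (i : Fin n) :
    0 ≤ 1 + (1 - stepLevel Fk E i) / Fk (stepLevel Fk E i) := by
  obtain ⟨⟨h0, h1⟩, _⟩ := step_spec' E i
  have := Fk_pos h0 h1
  have : 0 ≤ (1 - stepLevel Fk E i) / Fk (stepLevel Fk E i) :=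
    div_nonneg (by linarith) this.le
  linarith

lemma xe_nonneg (j i : Fin n) : 0 ≤ xe E j i := by
  unfold xe
  split_ifs with h
  · exact mul_nonneg (le_max_right _ _) (fac_nonneg E i)
  · exact le_rfl

lemma sum_xe_into (i : Fin n) :
    ∑ j, xe E j i =
      (∑ j ∈ neighborsBefore E i,
        max (stepLevel Fk E i - greedyPotential Fk E i.val j) 0) *
      (1 + (1 - stepLevel Fk E i) / Fk (stepLevel Fk E i)) := by
  rw [Finset.sum_mul]
  unfold xe
  rw [neighborsBefore, Finset.sum_filter]

lemma max_sub_eq (a w : ℝ) : max a w - a = max (w - a) 0 := by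
  rcases le_total w a with h | h
  · rw [max_eq_left h, max_eq_right (by linarith)] ; ring
  · rw [max_eq_right h, max_eq_left (by linarith)]

lemma step_increase {m : ℕ} (h : m < n) :
    (∑ v, greedyPotential Fk E (m+1) v) ≤
      (∑ v, greedyPotential Fk E m v) + ∑ j, xe E j ⟨m,h⟩ := by
  set w := stepLevel Fk E ⟨m,h⟩ with hw
  set N := neighborsBefore E ⟨m,h⟩ with hN
  have hvmN : (⟨m,h⟩ : Fin n) ∉ N := by
    simp [hN, neighborsBefore]
  have hdiff : ∑ v, (greedyPotential Fk E (m+1) v - greedyPotential Fk E m v) =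
      ∑ v ∈ insert ⟨m,h⟩ N, (greedyPotential Fk E (m+1) v - greedyPotential Fk E m v) := by
    symm
    apply Finset.sum_subset (Finset.subset_univ _)
    intro v _ hv
    simp only [Finset.mem_insert, not_or] at hv
    rw [Y_succ Fk E h v, if_neg hv.1, if_neg hv.2]
    ring
  have harr : greedyPotential Fk E (m+1) ⟨m,h⟩ - greedyPotential Fk E m ⟨m,h⟩ = 1 - w := by
    rw [Y_succ Fk E h ⟨m,h⟩, if_pos rfl, Y_zero E m ⟨m,h⟩ le_rfl]
    ring
  have hraise : ∀ j ∈ N,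
      greedyPotential Fk E (m+1) j - greedyPotential Fk E m j =
        max (w - greedyPotential Fk E m j) 0 := by
    intro j hj
    have hjlt : j < (⟨m,h⟩ : Fin n) := by
      simp only [hN, neighborsBefore, mem_filter] at hj
      exact hj.2.1
    rw [Y_succ Fk E h j, if_neg (ne_of_lt hjlt), if_pos (hN ▸ hj), max_sub_eq]
  have hsum : ∑ v, greedyPotential Fk E (m+1) v - ∑ v, greedyPotential Fk E m v =
      (1 - w) + ∑ j ∈ N, max (w - greedyPotential Fk E m j) 0 := by
    rw [← Finset.sum_sub_distrib, hdiff, Finset.sum_insert hvmN, harr]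
    congr 1
    exact Finset.sum_congr rfl hraise
  set R := ∑ j ∈ N, max (w - greedyPotential Fk E m j) 0 with hR
  have hRnn : 0 ≤ R := Finset.sum_nonneg fun j _ => le_max_right _ _
  have hxe : ∑ j, xe E j ⟨m,h⟩ = R * (1 + (1 - w) / Fk w) := by
    rw [sum_xe_into E ⟨m,h⟩]
  rw [hxe]
  obtain ⟨⟨hw0, hw1⟩, hRle⟩ := step_spec E h
  rcases eq_or_lt_of_le hw1 with heq | hlt
  · rw [← hw] at *
    rw [heq]
    simp
    linarith [hsum]
  · have htight : Fk w ≤ R := step_tight E h hlt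
    have hFpos := Fk_pos hw0 hw1
    have hfac : Fk w * ((1 - w) / Fk w) = 1 - w := by
      have hne : Fk w ≠ 0 := hFpos.ne'
      field_simp
    have hmul : Fk w * ((1 - w) / Fk w) ≤ R * ((1 - w) / Fk w) :=
      mul_le_mul_of_nonneg_right htight (div_nonneg (by linarith) hFpos.le)
    have h1w : 1 - w ≤ R * ((1 - w) / Fk w) := le_trans (le_of_eq hfac.symm) hmul
    nlinarith [hsum, h1w]

lemma total_le :
    ∑ v, greedyPotential Fk E n v ≤ ∑ i, ∑ j, xe E j i := by
  set g : ℕ → ℝ := fun m => ∑ v, greedyPotential Fk E m v with hg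
  set B : ℕ → ℝ := fun m => if h : m < n then ∑ j, xe E j ⟨m,h⟩ else 0 with hB
  have h0 : g 0 = 0 := by
    simp only [hg]
    exact Finset.sum_eq_zero fun v _ => rfl
  have htel : ∑ m ∈ range n, (g (m+1) - g m) = g n - g 0 := Finset.sum_range_sub g n
  have hstep : ∀ m ∈ range n, g (m+1) - g m ≤ B m := by
    intro m hm
    have h : m < n := Finset.mem_range.mp hm
    rw [hB]
    simp only [dif_pos h]
    have := step_increase E h
    simp only [hg]
    linarith
  have : g n - g 0 ≤ ∑ m ∈ range n, B m := htel ▸ Finset.sum_le_sum hstep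
  have hBsum : ∑ m ∈ range n, B m = ∑ i, ∑ j, xe E j i := by
    rw [← Fin.sum_univ_eq_sum_range B n]
    apply Finset.sum_congr rfl
    intro i _
    simp only [hB, dif_pos i.isLt]
  rw [h0] at this
  rw [← hBsum]
  linarith

lemma xe_le_Hdiff (v : Fin n) {m : ℕ} (h : m < n) :
    xe E v ⟨m,h⟩ ≤
      (greedyPotential Fk E (m+1) v + Fk (1 - greedyPotential Fk E (m+1) v)) -
        (greedyPotential Fk E m v + Fk (1 - greedyPotential Fk E m v)) := by
  obtain ⟨hb0, hb1⟩ := Y_bounds E m v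
  obtain ⟨hb0', hb1'⟩ := Y_bounds E (m+1) v
  have hmono := Y_mono_step E m v
  have hRHS0 : 0 ≤
      (greedyPotential Fk E (m+1) v + Fk (1 - greedyPotential Fk E (m+1) v)) -
        (greedyPotential Fk E m v + Fk (1 - greedyPotential Fk E m v)) := by
    have := H_mono hb0 hmono hb1'
    linarith
  unfold xe
  split_ifs with hcond
  · set w := stepLevel Fk E ⟨m,h⟩ with hwdef
    obtain ⟨⟨hw0, hw1⟩, _⟩ := step_spec E h
    have hvN : v ∈ neighborsBefore E ⟨m,h⟩ := by
      simp only [neighborsBefore, mem_filter, mem_univ, true_and]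
      exact hcond
    have hY1 : greedyPotential Fk E (m+1) v = max (greedyPotential Fk E m v) w := by
      rw [Y_succ Fk E h v, if_neg (ne_of_lt hcond.1), if_pos hvN]
    rcases le_total w (greedyPotential Fk E m v) with hle | hge
    · rw [show max (w - greedyPotential Fk E (⟨m,h⟩ : Fin n).val v) 0 = 0 from
        max_eq_right (by simpa using (by linarith : w - greedyPotential Fk E m v ≤ 0))]
      simpa using hRHS0
    · have hmax : max (greedyPotential Fk E m v) w = w := max_eq_right hge
      have hmax2 : max (w - greedyPotential Fk E (⟨m,h⟩ : Fin n).val v) 0 =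
          w - greedyPotential Fk E m v := max_eq_left (by simpa using (by linarith :
            (0:ℝ) ≤ w - greedyPotential Fk E m v))
      rw [hmax2, hY1, hmax]
      exact keyIneq hb0 hge hw1
  · exact le_trans le_rfl (le_trans le_rfl hRHS0)

lemma raise_load (v : Fin n) :
    ∑ u, xe E v u ≤
      (greedyPotential Fk E n v + Fk (1 - greedyPotential Fk E n v)) -
        (greedyPotential Fk E (v.val+1) v + Fk (1 - greedyPotential Fk E (v.val+1) v)) := by
  set HY : ℕ → ℝ := fun m =>
    greedyPotential Fk E m v + Fk (1 - greedyPotential Fk E m v) with hHY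
  set C : ℕ → ℝ := fun m => if h : m < n then xe E v ⟨m,h⟩ else 0 with hC
  have hsum : ∑ u, xe E v u = ∑ m ∈ range n, C m := by
    rw [← Fin.sum_univ_eq_sum_range C n]
    apply Finset.sum_congr rfl
    intro i _
    simp only [hC, dif_pos i.isLt]
  have hvn : v.val + 1 ≤ n := v.isLt
  have hzero : ∀ m ∈ range (v.val+1), C m = 0 := by
    intro m hm
    have hmv : m ≤ v.val := by
      have := Finset.mem_range.mp hm
      omega
    simp only [hC]
    split_ifs with h
    · unfold xe
      rw [if_neg]
      intro hlt
      have : v.val < m := hlt.1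
      omega
    · rfl
  have hsplit : ∑ m ∈ range n, C m = ∑ m ∈ Finset.Ico (v.val+1) n, C m := by
    rw [Finset.range_eq_Ico, ← Finset.sum_Ico_consecutive C (Nat.zero_le _) hvn,
      ← Finset.range_eq_Ico]
    rw [Finset.sum_eq_zero hzero]
    ring
  have hbound : ∀ m ∈ Finset.Ico (v.val+1) n, C m ≤ HY (m+1) - HY m := by
    intro m hm
    have h : m < n := (Finset.mem_Ico.mp hm).2
    simp only [hC, dif_pos h]
    exact xe_le_Hdiff E v h
  have htel : ∑ m ∈ Finset.Ico (v.val+1) n, (HY (m+1) - HY m) = HY n - HY (v.val+1) := by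
    rw [Finset.sum_Ico_eq_sub _ hvn, Finset.sum_range_sub HY, Finset.sum_range_sub HY]
    ring
  calc ∑ u, xe E v u = ∑ m ∈ Finset.Ico (v.val+1) n, C m := by rw [hsum, hsplit]
    _ ≤ ∑ m ∈ Finset.Ico (v.val+1) n, (HY (m+1) - HY m) := Finset.sum_le_sum hbound
    _ = HY n - HY (v.val+1) := htel

lemma arrival_load (v : Fin n) :
    ∑ u, xe E u v ≤ Fk (stepLevel Fk E v) + (1 - stepLevel Fk E v) := by
  rw [sum_xe_into E v]
  obtain ⟨⟨hw0, hw1⟩, hRle⟩ := step_spec' E v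
  have hFpos := Fk_pos hw0 hw1
  have hfacnn := fac_nonneg E v
  have hle := mul_le_mul_of_nonneg_right hRle hfacnn
  have hid : Fk (stepLevel Fk E v) * (1 + (1 - stepLevel Fk E v) / Fk (stepLevel Fk E v)) =
      Fk (stepLevel Fk E v) + (1 - stepLevel Fk E v) := by
    field_simp
  linarith

lemma load_bound (v : Fin n) :
    (∑ u, xe E u v) + (∑ u, xe E v u) ≤ 1 + Fk 0 := by
  have h1 := arrival_load E v
  have h2 := raise_load E v
  set w := stepLevel Fk E v with hw
  obtain ⟨⟨hw0, hw1⟩, _⟩ := step_spec' E v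
  have harr : greedyPotential Fk E (v.val+1) v = 1 - w := Y_arrival E v
  have hF : Fk (1 - (1 - w)) = Fk w := by norm_num
  obtain ⟨hn0, hn1⟩ := Y_bounds E n v
  have hH : greedyPotential Fk E n v + Fk (1 - greedyPotential Fk E n v) ≤
      1 + Fk (1 - 1) := H_mono hn0 hn1 le_rfl
  rw [harr, hF] at h2
  norm_num at hH
  linarith

end Dual

section Main
variable {n : ℕ} (E : Fin n → Fin n → Bool)

lemma cover_pair {i j : Fin n} (hij : i < j) (hE : E i j = true) :
    1 ≤ greedyPotential Fk E n i + greedyPotential Fk E n j := by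
  have hiN : i ∈ neighborsBefore E j := by
    simp [neighborsBefore, hij, hE]
  have hs := Y_succ Fk E j.isLt i
  simp only [Fin.eta] at hs
  rw [if_neg (ne_of_lt hij), if_pos hiN] at hs
  have hw := (step_spec' E j).1
  have h1 : stepLevel Fk E j ≤ greedyPotential Fk E (j.val+1) i := by
    rw [hs] ; exact le_max_right _ _
  have h2 : greedyPotential Fk E (j.val+1) j = 1 - stepLevel Fk E j := Y_arrival E j
  have h3 : greedyPotential Fk E (j.val+1) i ≤ greedyPotential Fk E n i :=
    Y_mono E (j.val+1) n i j.isLt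
  have h4 : greedyPotential Fk E (j.val+1) j ≤ greedyPotential Fk E n j :=
    Y_mono E (j.val+1) n j j.isLt
  rw [h2] at h4
  linarith

lemma cover (hsymm : ∀ i j, E i j = E j i) (hloop : ∀ i, E i i = false) :
    ∀ i j, E i j = true → 1 ≤ greedyPotential Fk E n i + greedyPotential Fk E n j := by
  intro i j hE
  rcases lt_trichotomy i j with h | h | h
  · exact cover_pair E h hE
  · rw [h] at hE ; rw [hloop j] at hE ; simp at hE
  · have hE' : E j i = true := by rw [hsymm j i] ; exact hE
    have := cover_pair E h hE'
    linarith

lemma competitive (ystar : Fin n → ℝ) (hstar : ∀ v, ystar v ∈ Set.Icc (0:ℝ) 1)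
    (hcov : ∀ i j, E i j = true → 1 ≤ ystar i + ystar j) :
    ∑ v, greedyPotential Fk E n v ≤ 1.901 * ∑ v, ystar v := by
  have h2 : ∀ i j : Fin n, xe E j i ≤ xe E j i * (ystar j + ystar i) := by
    intro i j
    have hnn := xe_nonneg E j i
    unfold xe at *
    split_ifs with hc
    · exact le_mul_of_one_le_right (by rw [if_pos hc] at hnn ; exact hnn) (hcov j i hc.2)
    · simp
  have hsplit : ∑ i, ∑ j, xe E j i * (ystar j + ystar i) =
      ∑ v, ((∑ u, xe E v u) + (∑ u, xe E u v)) * ystar v := by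
    have e1 : ∀ i : Fin n, ∑ j, xe E j i * (ystar j + ystar i) =
        ∑ j, xe E j i * ystar j + (∑ j, xe E j i) * ystar i := by
      intro i
      rw [Finset.sum_mul]
      rw [← Finset.sum_add_distrib]
      apply Finset.sum_congr rfl
      intro j _
      ring
    rw [Finset.sum_congr rfl (fun i _ => e1 i), Finset.sum_add_distrib]
    rw [Finset.sum_comm (f := fun i j => xe E j i * ystar j)]
    rw [← Finset.sum_add_distrib]
    apply Finset.sum_congr rfl
    intro v _
    rw [← Finset.sum_mul]
    ring
  have hload : ∀ v, ((∑ u, xe E v u) + (∑ u, xe E u v)) * ystar v ≤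
      (1 + Fk 0) * ystar v := by
    intro v
    apply mul_le_mul_of_nonneg_right _ (hstar v).1
    linarith [load_bound E v]
  have hb : (1 + Fk 0) ≤ (1.901:ℝ) := by
    have h19 : (1.901:ℝ) = 1901/1000 := by norm_num
    rw [h19]
    linarith [Fk_zero_le]
  calc ∑ v, greedyPotential Fk E n v
      ≤ ∑ i, ∑ j, xe E j i := total_le E
    _ ≤ ∑ i, ∑ j, xe E j i * (ystar j + ystar i) :=
        Finset.sum_le_sum fun i _ => Finset.sum_le_sum fun j _ => h2 i j
    _ = ∑ v, ((∑ u, xe E v u) + (∑ u, xe E u v)) * ystar v := hsplit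
    _ ≤ ∑ v, (1 + Fk 0) * ystar v := Finset.sum_le_sum fun v _ => hload v
    _ ≤ ∑ v, (1.901:ℝ) * ystar v := by
        apply Finset.sum_le_sum
        intro v _
        exact mul_le_mul_of_nonneg_right hb (hstar v).1
    _ = 1.901 * ∑ v, ystar v := by rw [Finset.mul_sum]

end Main

/-- Main theorem: `GreedyAllocation` with the allocation function `f_{6/5}` is
`1.901`-competitive for online fractional vertex cover in general graphs. -/
theorem greedyAllocation_1901 (k : ℝ) (hk : k = 6 / 5) (f : ℝ → ℝ)
    (hf : ∀ z, f z = ((1 + k) / 2 - z) ^ ((1 + k) / (2 * k)) *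
                     (z + (k - 1) / 2) ^ ((k - 1) / (2 * k)))
    (n : ℕ) (E : Fin n → Fin n → Bool)
    (hsymm : ∀ i j, E i j = E j i) (hloop : ∀ i, E i i = false)
    (y : Fin n → ℝ) (hy : y = greedyPotential f E n) :
    (∀ v, y v ∈ Set.Icc (0:ℝ) 1) ∧
    (∀ i j, E i j = true → 1 ≤ y i + y j) ∧
    (∀ ystar : Fin n → ℝ, (∀ v, ystar v ∈ Set.Icc (0:ℝ) 1) →
      (∀ i j, E i j = true → 1 ≤ ystar i + ystar j) →
      ∑ v, y v ≤ 1.901 * ∑ v, ystar v) := by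
  subst hk
  have hfF : f = Fk := by
    funext z
    rw [hf z]
    norm_num [Fk]
  subst hfF
  subst hy
  refine ⟨?_, ?_, ?_⟩
  · intro v
    exact ⟨(Y_bounds E n v).1, (Y_bounds E n v).2⟩
  · exact cover E hsymm hloop
  · intro ystar hstar hcov
    exact competitive E ystar hstar hcov
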